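/- arXiv:2508.12836 — 3 statements merged into one kernel-verified Lean document; each statement's English description precedes it below -/
import Mathlib

section
/- Let R be a ring, e ∈ R an idempotent, and M a right module over R/(e) (viewed as an R-module annihilated by e). Then Ext^i_R(Re ⊗_{eRe} eR, M) = 0 for i = 0 and i = 1. -/
/-!
STATEMENT 0: Let R be a ring, e ∈ R an idempotent, and M a right R-module annihilated
by the two-sided ideal (e) = ReR. Then Ext^i_R(Re ⊗_{eRe} eR, M) = 0 for i = 0, 1.

Right R-modules are formalized as modules over Rᵐᵒᵖ. The right R-module
Re ⊗_{eRe} eR is characterized by its universal property: it receives a map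
β : R × R → N, (x, y) ↦ xe ⊗ ey which is bi-additive, eRe-balanced and right
R-linear in the second variable, and which is universal among such maps.
-/

open CategoryTheory

universe u

variable {R : Type u} [Ring R]

/-- `N` together with `β` is (a model of) the right `R`-module `Re ⊗_{eRe} eR`,
where `β x y` corresponds to the elementary tensor `(x * e) ⊗ (e * y)`. -/
structure IsCornerTensor (e : R) (N : Type u) [AddCommGroup N] [Module Rᵐᵒᵖ N] where
  β : R → R → N
  add_left : ∀ x x' y, β (x + x') y = β x y + β x' y
  add_right : ∀ x y y', β x (y + y') = β x y + β x y'
  factors : ∀ x y, β x y = β (x * e) (e * y)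
  balanced : ∀ x s y, β (x * (e * s * e)) y = β x ((e * s * e) * y)
  right_linear : ∀ x y r, β x (y * r) = MulOpposite.op r • β x y
  univ : ∀ (P : Type u) [AddCommGroup P] [Module Rᵐᵒᵖ P] (γ : R → R → P),
    (∀ x x' y, γ (x + x') y = γ x y + γ x' y) →
    (∀ x y y', γ x (y + y') = γ x y + γ x y') →
    (∀ x y, γ x y = γ (x * e) (e * y)) →
    (∀ x s y, γ (x * (e * s * e)) y = γ x ((e * s * e) * y)) →
    (∀ x y r, γ x (y * r) = MulOpposite.op r • γ x y) →
    ∃! f : N →ₗ[Rᵐᵒᵖ] P, ∀ x y, f (β x y) = γ x y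

namespace CornerAux

open MulOpposite

variable {e : R} {N : Type u} [AddCommGroup N] [Module Rᵐᵒᵖ N]
variable {M : Type u} [AddCommGroup M] [Module Rᵐᵒᵖ M]

lemma mem_span_eR (e y : R) : e * y ∈ TwoSidedIdeal.span ({e} : Set R) :=
  TwoSidedIdeal.mul_mem_right _ _ _ (TwoSidedIdeal.subset_span rfl)

variable (he : IsIdempotentElem e) (hN : IsCornerTensor e N)
variable (hM : ∀ (m : M) (x : R), x ∈ TwoSidedIdeal.span ({e} : Set R) →
      MulOpposite.op x • m = 0)

include he hN hM in
/-- Every `Rᵐᵒᵖ`-linear map from the corner tensor to `M` is zero. -/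
lemma hom_eq_zero (f : N →ₗ[Rᵐᵒᵖ] M) : f = 0 := by
  obtain ⟨g, -, hg'⟩ := hN.univ M (fun _ _ => (0 : M))
    (by simp) (by simp) (by simp) (by simp) (by simp)
  have h0 : (0 : N →ₗ[Rᵐᵒᵖ] M) = g := hg' 0 (by simp)
  refine (hg' f ?_).trans h0.symm
  intro x y
  have h1 : hN.β x y = op y • (op e • hN.β (x * e) e) := by
    rw [hN.factors x y]
    have h2 : hN.β (x * e) (e * y) = op y • hN.β (x * e) e := hN.right_linear (x * e) e y
    have h3 := hN.right_linear (x * e) e e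
    rw [he.eq] at h3
    rw [h2, ← h3]
  rw [h1, map_smul, map_smul, smul_smul, ← op_mul]
  exact hM _ _ (mem_span_eR e y)

include he hN in
/-- Any surjection onto `N` whose kernel is annihilated by `(e)` splits. -/
lemma splitting {E : Type u} [AddCommGroup E] [Module Rᵐᵒᵖ E]
    (π : E →ₗ[Rᵐᵒᵖ] N) (hsurj : Function.Surjective π)
    (hker : ∀ a : E, π a = 0 → ∀ x : R, x ∈ TwoSidedIdeal.span ({e} : Set R) →
      op x • a = 0) :
    ∃ σ : N →ₗ[Rᵐᵒᵖ] E, π.comp σ = LinearMap.id := by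
  classical
  choose t ht using fun x : R => hsurj (hN.β (x * e) e)
  -- key : equality after smul by `op (e*y)` only depends on the image under π
  have key : ∀ (a b : E) (y : R), π a = π b → op (e * y) • a = op (e * y) • b := by
    intro a b y hab
    have : op (e * y) • (a - b) = 0 :=
      hker (a - b) (by rw [map_sub, hab, sub_self]) _ (mem_span_eR e y)
    rw [smul_sub, sub_eq_zero] at this
    exact this
  have key2 : ∀ (a b : E) (y : R), π a = π b → op e • a = a → op e • b = b →
      op y • a = op y • b := by
    intro a b y hab ha hb
    have := key a b y hab
    rwa [op_mul, mul_smul, mul_smul, ha, hb] at this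
  set γ : R → R → E := fun x y => op (e * y) • t x with hγ
  have c1 : ∀ x x' y, γ (x + x') y = γ x y + γ x' y := by
    intro x x' y
    have : π (t (x + x')) = π (t x + t x') := by
      rw [map_add, ht, ht, ht, add_mul, hN.add_left]
    simpa [hγ, smul_add] using key _ _ y this
  have c2 : ∀ x y y', γ x (y + y') = γ x y + γ x y' := by
    intro x y y'
    simp only [hγ]
    rw [mul_add, MulOpposite.op_add, add_smul]
  have c3 : ∀ x y, γ x y = γ (x * e) (e * y) := by
    intro x y
    have h1 : π (t (x * e)) = π (t x) := by
      rw [ht, ht, mul_assoc, he.eq]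
    have h2 := key (t (x * e)) (t x) y h1
    simp only [hγ]
    rw [← mul_assoc, he.eq]
    exact h2.symm
  have c4 : ∀ x s y, γ (x * (e * s * e)) y = γ x ((e * s * e) * y) := by
    intro x s y
    simp only [hγ]
    have hy : e * (e * s * e * y) = e * s * e * y := by
      rw [← mul_assoc, ← mul_assoc, ← mul_assoc, he.eq]
    rw [hy]
    have ha : op e • (op e • t (x * (e * s * e))) = op e • t (x * (e * s * e)) := by
      rw [smul_smul, ← op_mul, he.eq]
    have hb : op e • (op (e * s * e) • t x) = op (e * s * e) • t x := by
      rw [smul_smul, ← op_mul, mul_assoc, mul_assoc, he.eq, ← mul_assoc]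
    have hab : π (op e • t (x * (e * s * e))) = π (op (e * s * e) • t x) := by
      rw [map_smul, map_smul, ht, ht]
      have e1 : op e • hN.β (x * (e * s * e) * e) e = hN.β (x * (e * s * e) * e) (e * e) :=
        (hN.right_linear _ e e).symm
      have e2 : x * (e * s * e) * e = x * (e * s * e) := by
        rw [mul_assoc, mul_assoc, he.eq, ← mul_assoc, ← mul_assoc]
      have e3 : op (e * s * e) • hN.β (x * e) e = hN.β (x * e) (e * (e * s * e)) :=
        (hN.right_linear (x * e) e (e * s * e)).symm
      have e4 : e * (e * s * e) = e * s * e := by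
        rw [← mul_assoc, ← mul_assoc, he.eq]
      have e5 : e * s * e * e = e * s * e := by rw [mul_assoc, he.eq]
      rw [e1, e2, he.eq, hN.balanced x s e, e3, e5, ← hN.factors]
    have hk := key2 _ _ y hab ha hb
    calc op (e * y) • t (x * (e * s * e))
        = op y • (op e • t (x * (e * s * e))) := by rw [smul_smul, ← op_mul]
      _ = op y • (op (e * s * e) • t x) := hk
      _ = op (e * s * e * y) • t x := by rw [smul_smul, ← op_mul, mul_assoc]
  have c5 : ∀ x y r, γ x (y * r) = op r • γ x y := by
    intro x y r
    simp only [hγ]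
    rw [← mul_assoc, op_mul, mul_smul]
  obtain ⟨f, hf, -⟩ := hN.univ E γ c1 c2 c3 c4 c5
  refine ⟨f, ?_⟩
  obtain ⟨g, -, hg'⟩ := hN.univ N hN.β hN.add_left hN.add_right hN.factors
    hN.balanced hN.right_linear
  have h1 : π.comp f = g := by
    refine hg' _ ?_
    intro x y
    have hv : π (f (hN.β x y)) = op (e * y) • π (t x) := by
      rw [hf x y, hγ]; simp [map_smul]
    rw [LinearMap.comp_apply, hv, ht x]
    have h2 : hN.β (x * e) (e * (e * y)) = op (e * y) • hN.β (x * e) e :=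
      hN.right_linear (x * e) e (e * y)
    rw [← h2, ← mul_assoc, he.eq, ← hN.factors]
  have h2 : (LinearMap.id : N →ₗ[Rᵐᵒᵖ] N) = g := hg' _ (by simp)
  rw [h1, h2]

include he hN hM in
/-- degree 0: any map `P0 → M` vanishing on the image of `d1` is zero,
given `P1 → P0 → N → 0` exact. -/
lemma ext_zero_aux {P0 P1 : Type u} [AddCommGroup P0] [AddCommGroup P1]
    [Module Rᵐᵒᵖ P0] [Module Rᵐᵒᵖ P1]
    (d1 : P1 →ₗ[Rᵐᵒᵖ] P0) (p : P0 →ₗ[Rᵐᵒᵖ] N) (hp : Function.Surjective p)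
    (hex0 : ∀ x, p x = 0 → ∃ y, d1 y = x)
    (f : P0 →ₗ[Rᵐᵒᵖ] M) (hf : ∀ x, f (d1 x) = 0) : f = 0 := by
  have hle : LinearMap.ker p ≤ LinearMap.ker f := by
    intro x hx
    obtain ⟨y, rfl⟩ := hex0 x hx
    exact hf y
  set q := (LinearMap.ker p).liftQ f hle with hq
  set eq := p.quotKerEquivOfSurjective hp with heq
  have h0 : q.comp (eq.symm.toLinearMap) = 0 := hom_eq_zero he hN hM _
  ext z
  have hz : f z = q ((LinearMap.ker p).mkQ z) := rfl
  rw [LinearMap.zero_apply, hz, ← eq.symm_apply_apply ((LinearMap.ker p).mkQ z)]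
  simpa using LinearMap.congr_fun h0 (eq ((LinearMap.ker p).mkQ z))

include he hN hM in
/-- degree 1: any map `P1 → M` vanishing on the image of `d2` factors through `d1`,
given `P2 → P1 → P0 → N → 0` exact. -/
lemma ext_one_aux {P0 P1 P2 : Type u} [AddCommGroup P0] [AddCommGroup P1] [AddCommGroup P2]
    [Module Rᵐᵒᵖ P0] [Module Rᵐᵒᵖ P1] [Module Rᵐᵒᵖ P2]
    (d2 : P2 →ₗ[Rᵐᵒᵖ] P1) (d1 : P1 →ₗ[Rᵐᵒᵖ] P0) (p : P0 →ₗ[Rᵐᵒᵖ] N)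
    (hp : Function.Surjective p)
    (h10 : ∀ x, p (d1 x) = 0)
    (hex0 : ∀ x, p x = 0 → ∃ y, d1 y = x)
    (hex1 : ∀ x, d1 x = 0 → ∃ y, d2 y = x)
    (f : P1 →ₗ[Rᵐᵒᵖ] M) (hf : ∀ x, f (d2 x) = 0) :
    ∃ g : P0 →ₗ[Rᵐᵒᵖ] M, g.comp d1 = f := by
  classical
  -- the pushout `E = (M × P0) / W`
  set T : P1 →ₗ[Rᵐᵒᵖ] M × P0 := LinearMap.prod f (-d1) with hT
  set W : Submodule Rᵐᵒᵖ (M × P0) := LinearMap.range T with hW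
  set mk : M × P0 →ₗ[Rᵐᵒᵖ] (M × P0) ⧸ W := W.mkQ with hmk
  have hWmem : ∀ w ∈ W, p w.2 = 0 := by
    rintro w ⟨u, rfl⟩
    simp [hT, h10 u]
  set π : ((M × P0) ⧸ W) →ₗ[Rᵐᵒᵖ] N :=
    W.liftQ (p.comp (LinearMap.snd Rᵐᵒᵖ M P0))
      (fun w hw => by simpa using hWmem w hw) with hπ
  have hπmk : ∀ z : M × P0, π (mk z) = p z.2 := fun z => rfl
  have hπsurj : Function.Surjective π := by
    intro n
    obtain ⟨q, hq⟩ := hp n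
    exact ⟨mk (0, q), by rw [hπmk]; exact hq⟩
  -- every element of the kernel of π is of the form mk (m, 0)
  have hker0 : ∀ a : (M × P0) ⧸ W, π a = 0 → ∃ m : M, a = mk (m, 0) := by
    intro a ha
    obtain ⟨⟨m, q⟩, rfl⟩ := W.mkQ_surjective a
    rw [show W.mkQ (m, q) = mk (m, q) from rfl] at ha ⊢
    rw [hπmk] at ha
    obtain ⟨u, hu⟩ := hex0 q ha
    refine ⟨m + f u, ?_⟩
    rw [hmk, Submodule.mkQ_apply, Submodule.mkQ_apply, Submodule.Quotient.eq]
    refine ⟨-u, ?_⟩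
    simp [hT, hu, Prod.ext_iff]
  have hkerann : ∀ a, π a = 0 → ∀ x : R, x ∈ TwoSidedIdeal.span ({e} : Set R) →
      op x • a = 0 := by
    intro a ha x hx
    obtain ⟨m, rfl⟩ := hker0 a ha
    have h1 : op x • mk (m, (0 : P0)) = mk (op x • m, (0 : P0)) := by
      rw [← map_smul]
      congr 1
      simp [Prod.smul_mk]
    rw [h1, hM m x hx]
    exact map_zero mk
  obtain ⟨σ, hσ⟩ := splitting he hN π hπsurj hkerann
  set ι : M →ₗ[Rᵐᵒᵖ] (M × P0) ⧸ W := mk.comp (LinearMap.inl Rᵐᵒᵖ M P0) with hι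
  have hιmk : ∀ m : M, ι m = mk (m, 0) := fun m => rfl
  have hπι : ∀ m, π (ι m) = 0 := by
    intro m
    rw [hιmk, hπmk]
    exact map_zero p
  have hι0 : ∀ m, ι m = 0 → m = 0 := by
    intro m hm
    rw [hιmk] at hm
    have hmem : ((m, 0) : M × P0) ∈ W := by
      rwa [hmk, Submodule.mkQ_apply, Submodule.Quotient.mk_eq_zero] at hm
    obtain ⟨u, hu⟩ := hmem
    have h1 : d1 u = 0 := by
      have h2 := congrArg Prod.snd hu
      simp [hT] at h2
      simpa using h2
    obtain ⟨v, rfl⟩ := hex1 u h1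
    have h2 := congrArg Prod.fst hu
    simp [hT] at h2
    rw [← h2]
    exact hf v
  have hinj : Function.Injective ι := by
    intro a b hab
    have : ι (a - b) = 0 := by rw [map_sub, hab, sub_self]
    have := hι0 _ this
    rwa [sub_eq_zero] at this
  set δ : ((M × P0) ⧸ W) →ₗ[Rᵐᵒᵖ] ((M × P0) ⧸ W) := LinearMap.id - σ.comp π with hδ
  have hδmem : ∀ a, δ a ∈ LinearMap.range ι := by
    intro a
    have hπδ : π (δ a) = 0 := by
      have hσa := LinearMap.congr_fun hσ (π a)
      rw [hδ]
      simp only [LinearMap.sub_apply, LinearMap.id_apply, LinearMap.comp_apply, map_sub]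
      rw [show π (σ (π a)) = π a from hσa, sub_self]
    obtain ⟨m, hm⟩ := hker0 _ hπδ
    exact ⟨m, by rw [hιmk]; exact hm.symm⟩
  set ρ : ((M × P0) ⧸ W) →ₗ[Rᵐᵒᵖ] M :=
    ((LinearEquiv.ofInjective ι hinj).symm.toLinearMap).comp
      (δ.codRestrict (LinearMap.range ι) hδmem) with hρ
  have hρι : ∀ m, ρ (ι m) = m := by
    intro m
    have hδι : δ (ι m) = ι m := by
      rw [hδ]
      simp only [LinearMap.sub_apply, LinearMap.id_apply, LinearMap.comp_apply]
      rw [hπι m, map_zero σ, sub_zero]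
    rw [hρ, LinearMap.comp_apply, LinearEquiv.coe_coe, LinearEquiv.symm_apply_eq]
    apply Subtype.ext
    rw [LinearMap.codRestrict_apply, LinearEquiv.ofInjective_apply]
    exact hδι
  refine ⟨ρ.comp (mk.comp (LinearMap.inr Rᵐᵒᵖ M P0)), ?_⟩
  ext x
  simp only [LinearMap.comp_apply, LinearMap.inr_apply]
  have h1 : mk ((0 : M), d1 x) = ι (f x) := by
    rw [hιmk, hmk, Submodule.mkQ_apply, Submodule.mkQ_apply, Submodule.Quotient.eq]
    refine ⟨-x, ?_⟩
    simp [hT, Prod.ext_iff]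
  rw [h1, hρι]

end CornerAux

open CornerAux in
theorem statement_0 (e : R) (he : IsIdempotentElem e)
    (N : Type u) [AddCommGroup N] [Module Rᵐᵒᵖ N] (hN : IsCornerTensor e N)
    (M : Type u) [AddCommGroup M] [Module Rᵐᵒᵖ M]
    -- M is annihilated by the two-sided ideal (e) = ReR
    (hM : ∀ (m : M) (x : R), x ∈ TwoSidedIdeal.span ({e} : Set R) →
      MulOpposite.op x • m = 0)
    (i : ℕ) (hi : i = 0 ∨ i = 1) :
    Subsingleton (((Ext ℤ (ModuleCat Rᵐᵒᵖ) i).obj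
      (Opposite.op (ModuleCat.of Rᵐᵒᵖ N))).obj (ModuleCat.of Rᵐᵒᵖ M)) := by
  set X : ModuleCat Rᵐᵒᵖ := ModuleCat.of Rᵐᵒᵖ N with hX
  set Y : ModuleCat Rᵐᵒᵖ := ModuleCat.of Rᵐᵒᵖ M with hY
  suffices h : Limits.IsZero (((Ext ℤ (ModuleCat Rᵐᵒᵖ) i).obj (Opposite.op X)).obj Y) by
    refine ⟨fun a b => ?_⟩
    have h1 := h.eq_of_src (𝟙 _) 0
    have h2 : ∀ c : ((Ext ℤ (ModuleCat Rᵐᵒᵖ) i).obj (Opposite.op X)).obj Y, c = 0 := by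
      intro c
      calc c = ModuleCat.Hom.hom (𝟙 (((Ext ℤ (ModuleCat Rᵐᵒᵖ) i).obj (Opposite.op X)).obj Y)) c :=
            rfl
        _ = ModuleCat.Hom.hom (0 : ((Ext ℤ (ModuleCat Rᵐᵒᵖ) i).obj (Opposite.op X)).obj Y ⟶ _) c := by rw [h1]
        _ = 0 := rfl
    rw [h2 a, h2 b]
  set P : ProjectiveResolution X := ProjectiveResolution.of X with hP
  refine Limits.IsZero.of_iso ?_ (P.isoExt i Y)
  rw [← HomologicalComplex.exactAt_iff_isZero_homology]
  -- facts about the resolution, in module language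
  set p : P.complex.X 0 →ₗ[Rᵐᵒᵖ] N := (P.π.f 0 : P.complex.X 0 ⟶ X).hom with hp0
  have hp : Function.Surjective p := by
    rw [hp0]
    exact (ModuleCat.epi_iff_surjective (P.π.f 0 : P.complex.X 0 ⟶ X)).mp inferInstance
  have h10 : ∀ x, p (P.complex.d 1 0 x) = 0 := by
    intro x
    have h := P.complex_d_comp_π_f_zero
    exact congrArg (fun g => ModuleCat.Hom.hom g x) h
  have hex0 : ∀ x, p x = 0 → ∃ y, P.complex.d 1 0 y = x := by
    have := (ShortComplex.moduleCat_exact_iff _).mp P.exact₀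
    exact fun x hx => this x hx
  have hex1 : ∀ x, P.complex.d 1 0 x = 0 → ∃ y, P.complex.d 2 1 y = x := by
    have := (ShortComplex.moduleCat_exact_iff _).mp (P.exact_succ 0)
    exact fun x hx => this x hx
  rcases hi with rfl | rfl
  · rw [(P.complex.linearYonedaObj ℤ Y).exactAt_iff' 0 0 1
      (by simp [CochainComplex.prev_nat_zero]) (by simp),
      ShortComplex.moduleCat_exact_iff]
    intro f hf
    let f' : P.complex.X 0 ⟶ Y := f
    have hf2 : P.complex.d 1 0 ≫ f' = 0 := hf
    have hf' : ∀ x, f'.hom (P.complex.d 1 0 x) = 0 := by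
      intro x
      calc f' (P.complex.d 1 0 x) = (P.complex.d 1 0 ≫ f') x := rfl
        _ = (0 : P.complex.X 1 ⟶ Y) x := by rw [hf2]
        _ = 0 := rfl
    have hzero : f' = (0 : P.complex.X 0 ⟶ Y) :=
      ModuleCat.hom_ext (ext_zero_aux he hN hM (P.complex.d 1 0).hom p hp hex0 f'.hom hf')
    exact ⟨0, by rw [map_zero]; exact hzero.symm⟩
  · rw [(P.complex.linearYonedaObj ℤ Y).exactAt_iff' 0 1 2
      (by simp [CochainComplex.prev_nat_succ]) (by simp),
      ShortComplex.moduleCat_exact_iff]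
    intro f hf
    let f' : P.complex.X 1 ⟶ Y := f
    have hf2 : P.complex.d 2 1 ≫ f' = 0 := hf
    have hf' : ∀ x, f'.hom (P.complex.d 2 1 x) = 0 := by
      intro x
      calc f' (P.complex.d 2 1 x) = (P.complex.d 2 1 ≫ f') x := rfl
        _ = (0 : P.complex.X 2 ⟶ Y) x := by rw [hf2]
        _ = 0 := rfl
    obtain ⟨g, hg⟩ := ext_one_aux he hN hM (P.complex.d 2 1).hom (P.complex.d 1 0).hom p hp
      h10 hex0 hex1 f'.hom hf'
    refine ⟨ModuleCat.ofHom g, ?_⟩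
    show P.complex.d 1 0 ≫ (ModuleCat.ofHom g : P.complex.X 0 ⟶ Y) = f'
    exact ModuleCat.hom_ext hg
end

section
/- Let T be a triangulated category with Serre functor ν and let P be a silting subcategory of T. Then the following are equivalent: (a) Hom_T(ν(P), P[i]) = 0 for all i > d; (b) ν_d(T_{≥0}^P) ⊆ T_{≥0}^P; (c) ν_d^{−1}(T_{≤0}^P) ⊆ T_{≤0}^P; (d) Hom_T(ν_d^j(P), P[i]) = 0 for all i, j ≥ 1, where ν_d = ν∘[−d] and (T_{≥0}^P, T_{≤0}^P) is the co-t-structure associated to P. -/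
/-!
STATEMENT 6: Equivalent characterizations of d-silting subcategories: for a silting
subcategory P of a triangulated category T with Serre functor ν, the conditions
(a) Hom(ν(P), P[i]) = 0 for i > d, (b) ν_d(T_{≥0}^P) ⊆ T_{≥0}^P,
(c) ν_d^{-1}(T_{≤0}^P) ⊆ T_{≤0}^P, (d) Hom(ν_d^j(P), P[i]) = 0 for i, j ≥ 1
are equivalent.
-/

open CategoryTheory CategoryTheory.Limits CategoryTheory.Pretriangulated

universe w v u

variable (k : Type w) [Field k]
variable (C : Type u) [Category.{v} C] [Preadditive C] [Linear k C] [HasZeroObject C]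
  [HasShift C ℤ] [∀ n : ℤ, (CategoryTheory.shiftFunctor C n).Additive] [Pretriangulated C]
  [HasBinaryBiproducts C]

/-- A Serre functor on a k-linear category: an (additive) autoequivalence ν together
with functorial isomorphisms D Hom(X,Y) ≅ Hom(Y, νX). -/
structure SerreFunctor : Type (max (max u v) w) where
  ν : C ≌ C
  additive : ν.functor.Additive
  duality : ∀ X Y : C, (Y ⟶ ν.functor.obj X) ≃ₗ[k] Module.Dual k (X ⟶ Y)
  natural : ∀ (X Y X' Y' : C) (a : X ⟶ X') (b : Y' ⟶ Y) (f : Y ⟶ ν.functor.obj X),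
    duality X' Y' (b ≫ f ≫ ν.functor.map a) = fun g => duality X Y f (a ≫ g ≫ b)

variable {k C}

/-- ν_d = ν ∘ [-d]. -/
def nud (S : SerreFunctor k C) (d : ℕ) : C ⥤ C :=
  CategoryTheory.shiftFunctor C (-(d : ℤ)) ⋙ S.ν.functor

/-- The inverse of ν_d. -/
def nudInv (S : SerreFunctor k C) (d : ℕ) : C ⥤ C :=
  S.ν.inverse ⋙ CategoryTheory.shiftFunctor C (d : ℤ)


/-- Iteration of an endofunctor. -/
def iterObj (F : C ⥤ C) : ℕ → C → C
  | 0, X => X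
  | n + 1, X => F.obj (iterObj F n X)

/-- A thick subcategory: closed under isomorphisms, shifts, extensions and
direct summands. -/
structure IsThick (Z : Set C) : Prop where
  iso : ∀ {X Y : C}, (X ≅ Y) → X ∈ Z → Y ∈ Z
  shift : ∀ X ∈ Z, ∀ n : ℤ, X⟦n⟧ ∈ Z
  ext₂ : ∀ T ∈ distTriang C, T.obj₁ ∈ Z → T.obj₃ ∈ Z → T.obj₂ ∈ Z
  summand : ∀ X Y : C, [HasBinaryBiproduct X Y] → (X ⊞ Y) ∈ Z → X ∈ Z

/-- `S` generates `C` as a thick subcategory: `thick S = C`. -/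
def GeneratesThick (S : Set C) : Prop :=
  ∀ Z : Set C, IsThick Z → S ⊆ Z → ∀ X : C, X ∈ Z

/-- A presilting subcategory: Hom(P, P[i]) = 0 for all i ≥ 1. -/
def IsPresiltingSet (P : Set C) : Prop :=
  ∀ A ∈ P, ∀ B ∈ P, ∀ i : ℤ, 1 ≤ i → ∀ f : A ⟶ B⟦i⟧, f = 0

/-- A silting subcategory: presilting and generating C as a thick subcategory. -/
def IsSiltingSet (P : Set C) : Prop := IsPresiltingSet P ∧ GeneratesThick P

/-- The coaisle T_{≥0}^P = ^⊥(P[>0]) of the co-t-structure associated to P. -/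
def coAisleGE (P : Set C) : Set C :=
  {X | ∀ A ∈ P, ∀ i : ℤ, 1 ≤ i → ∀ f : X ⟶ A⟦i⟧, f = 0}

/-- The aisle T_{≤0}^P = (P[<0])^⊥ of the co-t-structure associated to P. -/
def coAisleLE (P : Set C) : Set C :=
  {X | ∀ A ∈ P, ∀ i : ℤ, 1 ≤ i → ∀ f : A⟦-i⟧ ⟶ X, f = 0}

namespace Stmt6Aux

set_option linter.unusedSectionVars false
open ZeroObject

/-- All maps from `X` to `Y` vanish. -/
def Vz (X Y : C) : Prop := ∀ f : X ⟶ Y, f = 0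

lemma vz_src_iso {X X' Y : C} (e : X ≅ X') : Vz X Y ↔ Vz X' Y := by
  constructor <;> intro h f
  · have := h (e.hom ≫ f)
    calc f = e.inv ≫ e.hom ≫ f := by simp
    _ = e.inv ≫ 0 := by rw [this]
    _ = 0 := comp_zero
  · have := h (e.inv ≫ f)
    calc f = e.hom ≫ e.inv ≫ f := by simp
    _ = e.hom ≫ 0 := by rw [this]
    _ = 0 := comp_zero

lemma vz_tgt_iso {X Y Y' : C} (e : Y ≅ Y') : Vz X Y ↔ Vz X Y' := by
  constructor <;> intro h f
  · have := h (f ≫ e.inv)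
    calc f = (f ≫ e.inv) ≫ e.hom := by simp
    _ = 0 ≫ e.hom := by rw [this]
    _ = 0 := zero_comp
  · have := h (f ≫ e.hom)
    calc f = (f ≫ e.hom) ≫ e.inv := by simp
    _ = 0 ≫ e.inv := by rw [this]
    _ = 0 := zero_comp

lemma vz_of_isZero_src {X Y : C} (h : IsZero X) : Vz X Y := fun f => h.eq_of_src f 0
lemma vz_of_isZero_tgt {X Y : C} (h : IsZero Y) : Vz X Y := fun f => h.eq_of_tgt f 0

lemma vz_shift_iff (n : ℤ) {X Y : C} : Vz X Y ↔ Vz (X⟦n⟧) (Y⟦n⟧) := by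
  constructor
  · intro h f
    obtain ⟨g, rfl⟩ := (shiftFunctor C n).map_surjective f
    rw [h g, Functor.map_zero]
  · intro h f
    apply (shiftFunctor C n).map_injective
    rw [h ((shiftFunctor C n).map f), Functor.map_zero]

/-- `X⟦a⟧⟦b⟧ ≅ X⟦c⟧` when `a + b = c`. -/
def shiftShiftIso (X : C) (a b c : ℤ) (h : a + b = c) : (X⟦a⟧)⟦b⟧ ≅ X⟦c⟧ :=
  ((shiftFunctorAdd' C a b c h).symm.app X)

def shiftZeroIso (X : C) : X⟦(0 : ℤ)⟧ ≅ X := (shiftFunctorZero C ℤ).app X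

lemma vz_shift_left_iff (a : ℤ) {U W : C} : Vz (U⟦a⟧) W ↔ Vz U (W⟦-a⟧) := by
  rw [vz_shift_iff (-a) (X := U⟦a⟧)]
  exact vz_src_iso (shiftShiftIso U a (-a) 0 (by omega) ≪≫ shiftZeroIso U)

lemma vz_shift_right_iff (b : ℤ) {U W : C} : Vz U (W⟦b⟧) ↔ Vz (U⟦-b⟧) W := by
  rw [vz_shift_iff (-b) (X := U)]
  exact vz_tgt_iso (shiftShiftIso W b (-b) 0 (by omega) ≪≫ shiftZeroIso W)

/-- normalization: `Vz (U⟦a⟧) (W⟦b⟧) ↔ Vz U (W⟦b - a⟧)`. -/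
lemma vz_shift_shift_iff (a b : ℤ) {U W : C} : Vz (U⟦a⟧) (W⟦b⟧) ↔ Vz U (W⟦b - a⟧) := by
  rw [vz_shift_left_iff a]
  exact vz_tgt_iso (shiftShiftIso W b (-a) (b - a) (by omega))

section Serre

variable (S : SerreFunctor k C)


/-- Serre duality at the level of Hom-vanishing. -/
lemma vz_serre {X Y : C} : Vz Y (S.ν.functor.obj X) ↔ Vz X Y := by
  constructor
  · intro h g
    rw [← Module.forall_dual_apply_eq_zero_iff k g]
    intro φ
    have : φ = S.duality X Y ((S.duality X Y).symm φ) := by simp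
    rw [this, h ((S.duality X Y).symm φ), map_zero]
    rfl
  · intro h f
    have : S.duality X Y f = 0 := by
      apply LinearMap.ext
      intro g
      rw [h g, map_zero]
      rfl
    calc f = (S.duality X Y).symm (S.duality X Y f) := by simp
    _ = (S.duality X Y).symm 0 := by rw [this]
    _ = 0 := map_zero _

lemma vz_serre₂ {U W : C} : Vz (S.ν.functor.obj U) (S.ν.functor.obj W) ↔ Vz U W := by
  rw [vz_serre S (X := W) (Y := S.ν.functor.obj U), vz_serre S (X := U) (Y := W)]

/-- counit iso : `N (N' W) ≅ W`. -/
def counitIsoApp (W : C) : S.ν.functor.obj (S.ν.inverse.obj W) ≅ W := S.ν.counitIso.app W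

/-- removing ν : `Vz (ν U) W ↔ Vz U (ν⁻¹ W)`. -/
lemma vz_nu_left {U W : C} : Vz (S.ν.functor.obj U) W ↔ Vz U (S.ν.inverse.obj W) := by
  rw [← vz_serre₂ S (U := U) (W := S.ν.inverse.obj W)]
  exact vz_tgt_iso (counitIsoApp S W).symm

/-- `Vz (ν⁻¹ W) Y ↔ Vz Y W`. -/
lemma vz_nuinv_src {W Y : C} : Vz (S.ν.inverse.obj W) Y ↔ Vz Y W :=
  (vz_serre S (X := S.ν.inverse.obj W) (Y := Y)).symm.trans
    (vz_tgt_iso (X := Y) (counitIsoApp S W))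

end Serre

section Serre2

variable (S : SerreFunctor k C)

/-- `Vz U ((ν⁻¹ Z)⟦m⟧) ↔ Vz U (ν⁻¹ (Z⟦m⟧))`. -/
lemma vz_nuinv_shift (m : ℤ) {U Z : C} :
    Vz U ((S.ν.inverse.obj Z)⟦m⟧) ↔ Vz U (S.ν.inverse.obj (Z⟦m⟧)) := by
  rw [← vz_nu_left S (U := U) (W := Z⟦m⟧)]
  rw [vz_shift_right_iff m (U := S.ν.functor.obj U) (W := Z)]
  rw [← vz_nuinv_src S (W := Z) (Y := (S.ν.functor.obj U)⟦-m⟧)]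
  rw [vz_shift_right_iff (-m) (U := S.ν.inverse.obj Z) (W := S.ν.functor.obj U)]
  rw [neg_neg]
  rw [vz_serre S (X := U) (Y := (S.ν.inverse.obj Z)⟦m⟧)]

/-- `Vz (ν (U⟦m⟧)) W ↔ Vz ((ν U)⟦m⟧) W`. -/
lemma vz_nu_shift_src (m : ℤ) {U W : C} :
    Vz (S.ν.functor.obj (U⟦m⟧)) W ↔ Vz ((S.ν.functor.obj U)⟦m⟧) W := by
  rw [vz_nu_left S, vz_shift_left_iff m, vz_nuinv_shift S (-m),
    ← vz_nu_left S, vz_shift_right_iff (-m), neg_neg]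

/-- adjunction-style formula for `ν_d`. -/
lemma vz_nud_iff (dd : ℤ) {X W : C} :
    Vz (S.ν.functor.obj (X⟦-dd⟧)) W ↔ Vz X ((S.ν.inverse.obj W)⟦dd⟧) := by
  rw [vz_nu_left S, vz_shift_left_iff (-dd), neg_neg]

end Serre2

section Classes

variable (P : Set C)

/-- `^⊥(P⟦≥1⟧)` -/
def X1 : Set C := {X | ∀ A ∈ P, ∀ i : ℤ, 1 ≤ i → Vz X (A⟦i⟧)}

/-- `(P⟦≤0⟧)^⊥` -/
def Z0 : Set C := {Z | ∀ A ∈ P, ∀ j : ℤ, j ≤ 0 → Vz (A⟦j⟧) Z}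

def clA : Set C := {E | ∀ Z ∈ Z0 P, Vz E Z}

def clB : Set C := {F | ∀ X ∈ X1 P, Vz X F}

variable {P}

lemma shiftP_mem_X1 (hpre : IsPresiltingSet P) {A : C} (hA : A ∈ P) {j : ℤ} (hj : j ≤ 0) :
    A⟦j⟧ ∈ X1 P := by
  intro B hB i hi
  rw [vz_shift_shift_iff]
  exact fun f => hpre A hA B hB (i - j) (by omega) f

lemma shiftP_mem_Z0 (hpre : IsPresiltingSet P) {B : C} (hB : B ∈ P) {i : ℤ} (hi : 1 ≤ i) :
    B⟦i⟧ ∈ Z0 P := by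
  intro A hA j hj
  rw [vz_shift_shift_iff]
  exact fun f => hpre A hA B hB (i - j) (by omega) f

lemma shiftP_mem_clA {A : C} (hA : A ∈ P) {j : ℤ} (hj : j ≤ 0) : A⟦j⟧ ∈ clA P :=
  fun _Z hZ => hZ A hA j hj

lemma shiftP_mem_clB {A : C} (hA : A ∈ P) {i : ℤ} (hi : 1 ≤ i) : A⟦i⟧ ∈ clB P :=
  fun _X hX => hX A hA i hi

lemma clB_sub_Z0 (hpre : IsPresiltingSet P) : clB P ⊆ Z0 P := by
  intro F hF A hA j hj
  exact hF _ (shiftP_mem_X1 hpre hA hj)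

lemma X1_shift_nonpos (hX : X ∈ X1 P) {m : ℤ} (hm : m ≤ 0) : X⟦m⟧ ∈ X1 P := by
  intro A hA i hi
  rw [vz_shift_shift_iff]
  exact hX A hA (i - m) (by omega)

lemma Z0_shift_nonneg {Z : C} (hZ : Z ∈ Z0 P) {m : ℤ} (hm : 0 ≤ m) : Z⟦m⟧ ∈ Z0 P := by
  intro A hA j hj
  rw [vz_shift_right_iff m, vz_src_iso (shiftShiftIso A j (-m) (j - m) (by omega))]
  exact hZ A hA (j - m) (by omega)

lemma zero_mem_clA : (0 : C) ∈ clA P := fun _Z _hZ => vz_of_isZero_src (isZero_zero C)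

lemma zero_mem_clB : (0 : C) ∈ clB P := fun _X _hX => vz_of_isZero_tgt (isZero_zero C)

lemma clA_iso {E E' : C} (e : E ≅ E') (hE : E ∈ clA P) : E' ∈ clA P :=
  fun Z hZ => (vz_src_iso e).1 (hE Z hZ)

lemma clB_iso {F F' : C} (e : F ≅ F') (hF : F ∈ clB P) : F' ∈ clB P :=
  fun X hX => (vz_tgt_iso e).1 (hF X hX)

lemma clA_ext (T : Triangle C) (hT : T ∈ distTriang C) (h₁ : T.obj₁ ∈ clA P)
    (h₃ : T.obj₃ ∈ clA P) : T.obj₂ ∈ clA P := by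
  intro Z hZ f
  obtain ⟨g, hg⟩ := Triangle.yoneda_exact₂ T hT f (by rw [h₁ Z hZ (T.mor₁ ≫ f)])
  rw [hg, h₃ Z hZ g, comp_zero]

/-- maps from `X1` to nonneg shifts of `clB` objects vanish -/
lemma vz_X1_clB_shift {X F Y : C} (hX : X ∈ X1 P) (hF : F ∈ clB P) {s : ℤ} (hs : 0 ≤ s)
    (e : Y ≅ F⟦s⟧) : Vz X Y := by
  rw [vz_tgt_iso e, vz_shift_right_iff]
  exact hF _ (X1_shift_nonpos hX (by omega))

/-- maps from `clA` to `clB` objects (and their `⟦1⟧`-shift conjugates) vanish -/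
lemma vz_clA_clB (hpre : IsPresiltingSet P) {E F : C} (hE : E ∈ clA P) (hF : F ∈ clB P) :
    Vz E F :=
  hE F (clB_sub_Z0 hpre hF)

lemma vz_clA_neg_clB (hpre : IsPresiltingSet P) {E F : C} (hE : E ∈ clA P) (hF : F ∈ clB P) :
    Vz (E⟦(-1 : ℤ)⟧) F := by
  rw [vz_shift_left_iff, neg_neg]
  exact hE _ (Z0_shift_nonneg (clB_sub_Z0 hpre hF) (by omega))

end Classes

section Glue

variable {P : Set C}

/-- The product over `WalkingPair` is a binary biproduct. -/
noncomputable def piPairIso (f : WalkingPair → C) [HasProduct f] :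
    (∏ᶜ f) ≅ f WalkingPair.left ⊞ f WalkingPair.right where
  hom := biprod.lift (Pi.π f WalkingPair.left) (Pi.π f WalkingPair.right)
  inv := Pi.lift (fun j => WalkingPair.casesOn j biprod.fst biprod.snd)
  hom_inv_id := by
    apply Limits.Pi.hom_ext
    rintro (_ | _) <;> simp
  inv_hom_id := by
    apply biprod.hom_ext <;> simp

/-- The binary direct sum of two distinguished triangles is distinguished,
up to isomorphism on the three objects. -/
lemma sum_two_distinguished (T₁ T₂ : Triangle C) (h₁ : T₁ ∈ distTriang C)
    (h₂ : T₂ ∈ distTriang C) :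
    ∃ T ∈ distTriang C, Nonempty (T.obj₁ ≅ T₁.obj₁ ⊞ T₂.obj₁) ∧
      Nonempty (T.obj₂ ≅ T₁.obj₂ ⊞ T₂.obj₂) ∧ Nonempty (T.obj₃ ≅ T₁.obj₃ ⊞ T₂.obj₃) := by
  refine ⟨productTriangle (fun j => WalkingPair.casesOn j T₁ T₂),
    productTriangle_distinguished _ (by rintro (_ | _) <;> assumption), ?_, ?_, ?_⟩
  · exact ⟨piPairIso _⟩
  · exact ⟨piPairIso _⟩
  · exact ⟨piPairIso _⟩

/-- Transport of a distinguished triangle along an isomorphism of the middle object. -/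
lemma dist_transport₂ (D : Triangle C) (hD : D ∈ distTriang C) {M : C} (e : D.obj₂ ≅ M) :
    Triangle.mk (D.mor₁ ≫ e.hom) (e.inv ≫ D.mor₂) D.mor₃ ∈ distTriang C := by
  refine isomorphic_distinguished _ hD _ ?_
  refine Triangle.isoMk _ _ (Iso.refl _) e.symm (Iso.refl _) ?_ ?_ ?_ <;> simp [Triangle.mk]

/-- The key gluing lemma: given a distinguished triangle `R` and weight decompositions of
`R.obj₁` and `R.obj₃`, there exists a weight decomposition of `R.obj₂`. -/
lemma glue0 (hpre : IsPresiltingSet P)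
    (R : Triangle C) (hR : R ∈ distTriang C)
    {E₁ F₁ : C} (e₁ : E₁ ⟶ R.obj₁) (ρ₁ : R.obj₁ ⟶ F₁) (δ₁ : F₁ ⟶ E₁⟦(1 : ℤ)⟧)
    (hD1 : Triangle.mk e₁ ρ₁ δ₁ ∈ distTriang C) (hE₁ : E₁ ∈ clA P) (hF₁ : F₁ ∈ clB P)
    {E₃ F₃ : C} (e₃ : E₃ ⟶ R.obj₃) (ρ₃ : R.obj₃ ⟶ F₃) (δ₃ : F₃ ⟶ E₃⟦(1 : ℤ)⟧)
    (hD3 : Triangle.mk e₃ ρ₃ δ₃ ∈ distTriang C) (hE₃ : E₃ ∈ clA P) (hF₃ : F₃ ∈ clB P) :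
    ∃ T' ∈ distTriang C, T'.obj₁ ∈ clA P ∧ T'.obj₃ ∈ clB P ∧ T'.obj₂ = R.obj₂ := by
  classical
  set D1 : Triangle C := Triangle.mk e₁ ρ₁ δ₁ with hD1def
  set D3 : Triangle C := Triangle.mk e₃ ρ₃ δ₃ with hD3def
  set D3'' : Triangle C := D3.invRotate.invRotate.invRotate with hD3''def
  have hD3''dist : D3'' ∈ distTriang C :=
    inv_rot_of_distTriang _ (inv_rot_of_distTriang _ (inv_rot_of_distTriang _ hD3))
  set R' : Triangle C := R.invRotate with hR'def
  have hR'dist : R' ∈ distTriang C := inv_rot_of_distTriang _ hR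
  -- object identifications (definitional)
  have hobj1 : D3''.obj₁ = E₃⟦(-1 : ℤ)⟧ := rfl
  have hobj2 : D3''.obj₂ = R'.obj₁ := rfl
  have hobj3 : D3''.obj₃ = F₃⟦(-1 : ℤ)⟧ := rfl
  -- the lift γ'
  have hq : (D3''.mor₁ ≫ R'.mor₁) ≫ ρ₁ = 0 := by
    erw [Category.assoc]
    exact vz_clA_neg_clB hpre hE₃ hF₁ (D3''.mor₁ ≫ R'.mor₁ ≫ ρ₁)
  obtain ⟨γ₀, hγ₀⟩ := Triangle.coyoneda_exact₂ D1 hD1 (D3''.mor₁ ≫ R'.mor₁) hq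
  let γ' : D3''.obj₁ ⟶ E₁ := γ₀
  have hγe : D3''.mor₁ ≫ R'.mor₁ = γ' ≫ e₁ := hγ₀
  obtain ⟨E₂, x, y, hT2⟩ := distinguished_cocone_triangle γ'
  set T2 : Triangle C := Triangle.mk γ' x y with hT2def
  obtain ⟨η, hη₂, hη₃⟩ := complete_distinguished_triangle_morphism T2 R' hT2 hR'dist
    D3''.mor₁ e₁ hγe.symm
  -- η : E₂ ⟶ R.obj₂ (up to defeq)
  have hE₂ : E₂ ∈ clA P := by
    have h3 : T2.rotate.obj₃ ∈ clA P := by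
      have : T2.rotate.obj₃ = (E₃⟦(-1 : ℤ)⟧)⟦(1 : ℤ)⟧ := rfl
      rw [this]
      exact clA_iso (shiftShiftIso E₃ (-1) 1 0 (by omega) ≪≫ shiftZeroIso E₃).symm hE₃
    exact clA_ext T2.rotate (rot_of_distTriang _ hT2) hE₁ h3
  obtain ⟨F₂, ρ₂, δ₂, hD2⟩ := distinguished_cocone_triangle (η : E₂ ⟶ R'.obj₃)
  refine ⟨Triangle.mk η ρ₂ δ₂, hD2, hE₂, ?_, rfl⟩
  -- F₂ ∈ clB
  intro X' hX'
  -- vanishing into (F₃⟦-1⟧)⟦1⟧ and its shift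
  have vzF3a : ∀ g : X' ⟶ (F₃⟦(-1 : ℤ)⟧)⟦(1 : ℤ)⟧, g = 0 :=
    vz_X1_clB_shift hX' hF₃ (le_refl (0 : ℤ)) (shiftShiftIso F₃ (-1) 1 0 (by omega))
  have vzF1 : ∀ g : X' ⟶ F₁, g = 0 := hF₁ X' hX'
  -- (i) surjectivity of `η⁎`
  have surj : ∀ u : X' ⟶ R'.obj₃, ∃ p : X' ⟶ E₂, p ≫ η = u := by
    intro u
    -- step 1 : lift u ≫ R'.mor₃ through D3''
    obtain ⟨g, hg⟩ := Triangle.coyoneda_exact₁ D3''.rotate (rot_of_distTriang _ hD3''dist)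
      (u ≫ R'.mor₃) (vzF3a _)
    have hg' : u ≫ R'.mor₃ = g ≫ (-(D3''.mor₁⟦(1 : ℤ)⟧')) := hg
    have hp₀ : u ≫ R'.mor₃ = (-g) ≫ D3''.mor₁⟦(1 : ℤ)⟧' := by
      erw [hg', Preadditive.comp_neg, ← Preadditive.neg_comp]
    set p₀ : X' ⟶ D3''.obj₁⟦(1 : ℤ)⟧ := -g with hp₀def
    -- step 2 : q₀ = 0
    have hq₀ : (p₀ ≫ γ'⟦(1 : ℤ)⟧') ≫ e₁⟦(1 : ℤ)⟧' = 0 := by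
      erw [Category.assoc, ← Functor.map_comp, ← hγe, Functor.map_comp, ← Category.assoc,
        ← hp₀, Category.assoc, comp_distTriang_mor_zero₃₁ R' hR'dist, comp_zero]
    obtain ⟨t, ht⟩ := Triangle.coyoneda_exact₁ D1 hD1 (p₀ ≫ γ'⟦(1 : ℤ)⟧') hq₀
    have hq₀' : p₀ ≫ γ'⟦(1 : ℤ)⟧' = 0 := by
      erw [ht, vzF1 t, zero_comp]; rfl
    -- step 3 : lift p₀ through T2
    obtain ⟨s₀, hs₀⟩ := Triangle.coyoneda_exact₁ T2 hT2 p₀ hq₀'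
    let s : X' ⟶ E₂ := s₀
    have hs : p₀ = s ≫ T2.mor₃ := hs₀
    -- step 4 : u - s ≫ η factors through R'.mor₂
    have h4 : (u - s ≫ η) ≫ R'.mor₃ = 0 := by
      erw [Preadditive.sub_comp, Category.assoc, ← hη₃, sub_eq_zero, hp₀, hs]; exact Category.assoc _ _ _
    obtain ⟨v, hv⟩ := Triangle.coyoneda_exact₃ R' hR'dist (u - s ≫ η) h4
    -- step 5 : lift v through D1
    obtain ⟨v', hv'₀⟩ := Triangle.coyoneda_exact₂ D1 hD1 v (vzF1 _)
    have hv' : v = v' ≫ e₁ := hv'₀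
    refine ⟨s + v' ≫ x, ?_⟩
    have hxη : x ≫ η = e₁ ≫ R'.mor₂ := hη₂
    erw [Preadditive.add_comp, Category.assoc, hxη, ← Category.assoc, ← hv', ← hv]
    abel
  -- (ii) injectivity of `η⟦1⟧⁎`
  have inj : ∀ κ : X' ⟶ E₂⟦(1 : ℤ)⟧, κ ≫ η⟦(1 : ℤ)⟧' = 0 → κ = 0 := by
    intro κ hκ
    -- step 1 : κ ≫ y⟦1⟧ = 0
    have hyD : y ≫ D3''.mor₁⟦(1 : ℤ)⟧' = η ≫ R'.mor₃ := hη₃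
    have hlam : (κ ≫ y⟦(1 : ℤ)⟧') ≫ (D3''.mor₁⟦(1 : ℤ)⟧')⟦(1 : ℤ)⟧' = 0 := by
      erw [Category.assoc, ← Functor.map_comp, hyD, Functor.map_comp, ← Category.assoc,
        hκ, zero_comp]
    have hlam0 : κ ≫ y⟦(1 : ℤ)⟧' = 0 := by
      have hSdist : D3''.rotate.rotate.rotate ∈ distTriang C :=
        rot_of_distTriang _ (rot_of_distTriang _ (rot_of_distTriang _ hD3''dist))
      have hScond : (κ ≫ y⟦(1 : ℤ)⟧') ≫
          (D3''.rotate.rotate.rotate).mor₁⟦(1 : ℤ)⟧' = 0 := by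
        have hSmor : (D3''.rotate.rotate.rotate).mor₁ = -(D3''.mor₁⟦(1 : ℤ)⟧') := rfl
        erw [hSmor, Functor.map_neg, Preadditive.comp_neg, hlam, neg_zero]
      obtain ⟨g, hg⟩ := Triangle.coyoneda_exact₁ (D3''.rotate.rotate.rotate) hSdist
        (κ ≫ y⟦(1 : ℤ)⟧') hScond
      have hgz : g = 0 := vzF3a g
      erw [hg, hgz, zero_comp]; rfl
    -- step 2 : κ factors through x⟦1⟧
    have hT2rr : T2.rotate.rotate ∈ distTriang C :=
      rot_of_distTriang _ (rot_of_distTriang _ hT2)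
    obtain ⟨g', hg'⟩ := Triangle.coyoneda_exact₁ (T2.rotate.rotate) hT2rr κ hlam0
    have hg'' : κ = g' ≫ (-(x⟦(1 : ℤ)⟧')) := hg'
    have hκ' : κ = (-g') ≫ x⟦(1 : ℤ)⟧' := by erw [hg'', Preadditive.comp_neg, ← Preadditive.neg_comp]; rfl
    set κ' : X' ⟶ E₁⟦(1 : ℤ)⟧ := -g' with hκ'def
    -- step 3 : χ := κ' ≫ e₁⟦1⟧ factors through -(R'.mor₁⟦1⟧)
    have hxη : x ≫ η = e₁ ≫ R'.mor₂ := hη₂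
    have hχcond : (κ' ≫ e₁⟦(1 : ℤ)⟧') ≫ R'.mor₂⟦(1 : ℤ)⟧' = 0 := by
      erw [Category.assoc, ← Functor.map_comp, ← hxη, Functor.map_comp, ← Category.assoc,
        ← hκ', hκ]
    have hR'rot : R'.rotate ∈ distTriang C := rot_of_distTriang _ hR'dist
    obtain ⟨ω, hω⟩ := Triangle.coyoneda_exact₁ R'.rotate hR'rot (κ' ≫ e₁⟦(1 : ℤ)⟧') hχcond
    have hω' : κ' ≫ e₁⟦(1 : ℤ)⟧' = ω ≫ (-(R'.mor₁⟦(1 : ℤ)⟧')) := hω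
    -- step 4 : lift ω through D3''
    obtain ⟨g'', hg₂⟩ := Triangle.coyoneda_exact₁ D3''.rotate (rot_of_distTriang _ hD3''dist)
      ω (vzF3a _)
    have hg₂' : ω = g'' ≫ (-(D3''.mor₁⟦(1 : ℤ)⟧')) := hg₂
    -- step 5 : κ' = (-g'') ≫ γ'⟦1⟧
    have hmap : D3''.mor₁⟦(1 : ℤ)⟧' ≫ R'.mor₁⟦(1 : ℤ)⟧' = γ'⟦(1 : ℤ)⟧' ≫ e₁⟦(1 : ℤ)⟧' := by
      erw [← Functor.map_comp, ← Functor.map_comp, hγe]; rfl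
    have hχ' : κ' ≫ e₁⟦(1 : ℤ)⟧' = (g'' ≫ γ'⟦(1 : ℤ)⟧') ≫ e₁⟦(1 : ℤ)⟧' := by
      have l1 : (g'' ≫ (-(D3''.mor₁⟦(1 : ℤ)⟧'))) ≫ (-(R'.mor₁⟦(1 : ℤ)⟧')) =
          g'' ≫ (D3''.mor₁⟦(1 : ℤ)⟧' ≫ R'.mor₁⟦(1 : ℤ)⟧') := by
        exact (by intros; simp : ∀ {A B Z W : C} (f : A ⟶ B) (a : B ⟶ Z) (b : Z ⟶ W),
          (f ≫ (-a)) ≫ (-b) = f ≫ a ≫ b) _ _ _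
      erw [hω', hg₂', l1, hmap, ← Category.assoc]; rfl
    have hdiff : (κ' - g'' ≫ γ'⟦(1 : ℤ)⟧') ≫ e₁⟦(1 : ℤ)⟧' = 0 := by
      rw [Preadditive.sub_comp, hχ', sub_self]
    obtain ⟨t, ht⟩ := Triangle.coyoneda_exact₁ D1 hD1 (κ' - g'' ≫ γ'⟦(1 : ℤ)⟧') hdiff
    have hκ'' : κ' = g'' ≫ γ'⟦(1 : ℤ)⟧' := by
      have : κ' - g'' ≫ γ'⟦(1 : ℤ)⟧' = 0 := by erw [ht, vzF1 t, zero_comp]; rfl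
      rwa [sub_eq_zero] at this
    -- step 6 : conclude
    have hγx : γ' ≫ x = 0 := comp_distTriang_mor_zero₁₂ T2 hT2
    erw [hκ', hκ'', Category.assoc, ← Functor.map_comp, hγx, Functor.map_zero, comp_zero]
  -- conclusion
  intro w
  have hz31 : δ₂ ≫ η⟦(1 : ℤ)⟧' = 0 := comp_distTriang_mor_zero₃₁ _ hD2
  have hz12 : η ≫ ρ₂ = 0 := comp_distTriang_mor_zero₁₂ _ hD2
  have h1 : (w ≫ δ₂) ≫ η⟦(1 : ℤ)⟧' = 0 := by
    erw [Category.assoc, hz31, comp_zero]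
  have h2 : w ≫ δ₂ = 0 := inj _ h1
  obtain ⟨v, hv⟩ := Triangle.coyoneda_exact₃ _ hD2 w h2
  have hv₂ : w = v ≫ ρ₂ := hv
  obtain ⟨p, hp⟩ := surj v
  erw [hv₂, ← hp, Category.assoc, hz12, comp_zero]; rfl

end Glue

section Dec

variable (P : Set C)

/-- Every shift of `W` (up to adding a biproduct complement) admits a weight decomposition. -/
def Dec (W : C) : Prop := ∀ n : ℤ, ∃ T' ∈ distTriang C, T'.obj₁ ∈ clA P ∧ T'.obj₃ ∈ clB P ∧
  ∃ V : C, Nonempty (T'.obj₂ ≅ (W⟦n⟧) ⊞ V)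

variable {P}

/-- `X ⊞ 0 ≅ X`. -/
noncomputable def biprodZeroIso (X Z : C) (h : IsZero Z) : X ⊞ Z ≅ X where
  hom := biprod.fst
  inv := biprod.lift (𝟙 X) 0
  hom_inv_id := by
    apply biprod.hom_ext
    · simp
    · apply h.eq_of_tgt
  inv_hom_id := by simp

lemma dec_P (hpre : IsPresiltingSet P) {A : C} (hA : A ∈ P) : Dec P A := by
  intro n
  rcases le_or_gt n 0 with hn | hn
  · refine ⟨contractibleTriangle (A⟦n⟧), contractible_distinguished _,
      shiftP_mem_clA hA hn, fun X hX => vz_of_isZero_tgt (isZero_zero C), 0,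
      ⟨(biprodZeroIso _ _ (isZero_zero C)).symm⟩⟩
  · refine ⟨Triangle.mk (0 : (0 : C) ⟶ A⟦n⟧) (𝟙 _) 0, contractible_distinguished₁ _,
      fun Z hZ => vz_of_isZero_src (isZero_zero C), shiftP_mem_clB hA hn, 0,
      ⟨(biprodZeroIso _ _ (isZero_zero C)).symm⟩⟩

lemma dec_thick (hpre : IsPresiltingSet P) : IsThick {W : C | Dec P W} where
  iso {X Y} e hX := by
    intro n
    obtain ⟨T', hT', hA, hB, V, ⟨ev⟩⟩ := hX n
    exact ⟨T', hT', hA, hB, V,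
      ⟨ev ≪≫ biprod.mapIso ((shiftFunctor C n).mapIso e) (Iso.refl V)⟩⟩
  shift X hX m := by
    intro n
    obtain ⟨T', hT', hA, hB, V, ⟨ev⟩⟩ := hX (m + n)
    exact ⟨T', hT', hA, hB, V,
      ⟨ev ≪≫ biprod.mapIso (shiftShiftIso X m n (m + n) rfl).symm (Iso.refl V)⟩⟩
  ext₂ T hT h₁ h₃ := by
    intro n
    obtain ⟨D1, hD1, hA1, hB1, V₁, ⟨ev₁⟩⟩ := h₁ n
    obtain ⟨D3, hD3, hA3, hB3, V₃, ⟨ev₃⟩⟩ := h₃ n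
    have hTn : (Triangle.shiftFunctor C n).obj T ∈ distTriang C := by
      rw [← Triangle.shiftFunctor_eq]
      exact Triangle.shift_distinguished T hT n
    obtain ⟨S₁, hS₁, ⟨i₁⟩, ⟨i₂⟩, ⟨i₃⟩⟩ := sum_two_distinguished
      ((Triangle.shiftFunctor C n).obj T) (contractibleTriangle V₁) hTn
      (contractible_distinguished _)
    obtain ⟨S₂, hS₂, ⟨j₁⟩, ⟨j₂⟩, ⟨j₃⟩⟩ := sum_two_distinguished S₁
      (Triangle.mk (0 : (0 : C) ⟶ V₃) (𝟙 _) 0) hS₁ (contractible_distinguished₁ _)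
    have eR1 : S₂.obj₁ ≅ (T.obj₁⟦n⟧) ⊞ V₁ :=
      j₁ ≪≫ biprodZeroIso _ _ (isZero_zero C) ≪≫ i₁
    have eR3 : S₂.obj₃ ≅ (T.obj₃⟦n⟧) ⊞ V₃ :=
      j₃ ≪≫ biprod.mapIso (i₃ ≪≫ biprodZeroIso _ _ (isZero_zero C)) (Iso.refl V₃)
    have eR2 : S₂.obj₂ ≅ (T.obj₂⟦n⟧) ⊞ (V₁ ⊞ V₃) :=
      j₂ ≪≫ biprod.mapIso i₂ (Iso.refl V₃) ≪≫ biprod.associator _ _ _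
    have e1 : D1.obj₂ ≅ S₂.obj₁ := ev₁ ≪≫ eR1.symm
    have e3 : D3.obj₂ ≅ S₂.obj₃ := ev₃ ≪≫ eR3.symm
    obtain ⟨T'', hT'', hA'', hB'', hobj⟩ := glue0 hpre S₂ hS₂
      (D1.mor₁ ≫ e1.hom) (e1.inv ≫ D1.mor₂) D1.mor₃ (dist_transport₂ D1 hD1 e1) hA1 hB1
      (D3.mor₁ ≫ e3.hom) (e3.inv ≫ D3.mor₂) D3.mor₃ (dist_transport₂ D3 hD3 e3) hA3 hB3
    refine ⟨T'', hT'', hA'', hB'', V₁ ⊞ V₃, ?_⟩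
    rw [hobj]
    exact ⟨eR2⟩
  summand X Y _inst hXY := by
    intro n
    obtain ⟨T', hT', hA, hB, V, ⟨ev⟩⟩ := hXY n
    haveI : PreservesBinaryBiproducts (shiftFunctor C n) :=
      preservesBinaryBiproducts_of_preservesBiproducts _
    exact ⟨T', hT', hA, hB, Y⟦n⟧ ⊞ V,
      ⟨ev ≪≫ biprod.mapIso ((shiftFunctor C n).mapBiprod X Y) (Iso.refl V) ≪≫
        biprod.associator _ _ _⟩⟩

lemma key0 (hP : IsSiltingSet P) {X Z : C} (hX : X ∈ X1 P) (hZ : Z ∈ Z0 P) : Vz X Z := by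
  have hDec : Dec P X := hP.2 {W | Dec P W} (dec_thick hP.1) (fun A hA => dec_P hP.1 hA) X
  obtain ⟨T', hT', hA, hB, V, ⟨ev⟩⟩ := hDec 0
  have e' : T'.obj₂ ≅ X ⊞ V := ev ≪≫ biprod.mapIso (shiftZeroIso X) (Iso.refl V)
  have hι : (biprod.inl ≫ e'.inv) ≫ T'.mor₂ = 0 := hB X hX _
  obtain ⟨σ, hσ⟩ := Triangle.coyoneda_exact₂ T' hT' (biprod.inl ≫ e'.inv) hι
  intro f
  have h1 : f = (biprod.inl ≫ e'.inv) ≫ (e'.hom ≫ biprod.fst ≫ f) := by simp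
  rw [h1, hσ, Category.assoc, hA Z hZ (T'.mor₁ ≫ e'.hom ≫ biprod.fst ≫ f), comp_zero]

lemma key1 (hP : IsSiltingSet P) {X Z : C}
    (hX : ∀ A ∈ P, ∀ i : ℤ, 0 ≤ i → Vz X (A⟦i⟧))
    (hZ : ∀ A ∈ P, ∀ j : ℤ, j ≤ -1 → Vz (A⟦j⟧) Z) : Vz X Z := by
  rw [vz_shift_iff 1]
  apply key0 hP
  · intro A hA i hi
    rw [vz_shift_left_iff 1, vz_tgt_iso (shiftShiftIso A i (-1) (i - 1) (by omega))]
    exact hX A hA (i - 1) (by omega)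
  · intro A hA j hj
    rw [vz_shift_right_iff 1, vz_src_iso (shiftShiftIso A j (-1) (j - 1) (by omega))]
    exact hZ A hA (j - 1) (by omega)

end Dec

section Final

lemma vz_index_congr {X B : C} {a b : ℤ} (h : a = b) : Vz X (B⟦a⟧) ↔ Vz X (B⟦b⟧) := by
  subst h; rfl

lemma vz_src_index_congr {B Y : C} {a b : ℤ} (h : a = b) : Vz (B⟦a⟧) Y ↔ Vz (B⟦b⟧) Y := by
  subst h; rfl

variable (S : SerreFunctor k C)

lemma vz_nuA_iff (m i : ℤ) {A B : C} :
    Vz (S.ν.functor.obj (A⟦m⟧)) (B⟦i⟧) ↔ Vz (S.ν.functor.obj A) (B⟦i - m⟧) := by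
  rw [vz_nu_shift_src S m, vz_shift_shift_iff]

variable {P : Set C}

lemma shiftP_mem_LE (hpre : IsPresiltingSet P) {B : C} (hB : B ∈ P) {m : ℤ} (hm : 0 ≤ m) :
    B⟦m⟧ ∈ coAisleLE P := by
  intro A hA i hi
  show Vz (A⟦-i⟧) (B⟦m⟧)
  rw [vz_shift_shift_iff]
  exact fun f => hpre A hA B hB (m - -i) (by omega) f

lemma P_mem_GE (hpre : IsPresiltingSet P) {A : C} (hA : A ∈ P) : A ∈ coAisleGE P :=
  fun B hB i hi => hpre A hA B hB i hi

end Final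

end Stmt6Aux

theorem statement_6 (S : SerreFunctor k C) (d : ℕ)
    (P : Set C) (hP : IsSiltingSet P) :
    ((∀ A ∈ P, ∀ B ∈ P, ∀ i : ℤ, (d : ℤ) < i → ∀ f : S.ν.functor.obj A ⟶ B⟦i⟧, f = 0) ↔
        (∀ X ∈ coAisleGE P, (nud S d).obj X ∈ coAisleGE P)) ∧
    ((∀ X ∈ coAisleGE P, (nud S d).obj X ∈ coAisleGE P) ↔
        (∀ X ∈ coAisleLE P, (nudInv S d).obj X ∈ coAisleLE P)) ∧
    ((∀ X ∈ coAisleLE P, (nudInv S d).obj X ∈ coAisleLE P) ↔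
        (∀ A ∈ P, ∀ B ∈ P, ∀ i j : ℕ, 1 ≤ i → 1 ≤ j →
          ∀ f : iterObj (nud S d) j A ⟶ B⟦(i : ℤ)⟧, f = 0)) := by
  classical
  obtain ⟨hpre, hgen⟩ := hP
  open Stmt6Aux in
  -- implication (b) → (a)
  have impBA : (∀ X ∈ coAisleGE P, (nud S d).obj X ∈ coAisleGE P) →
      (∀ A ∈ P, ∀ B ∈ P, ∀ i : ℤ, (d : ℤ) < i → ∀ f : S.ν.functor.obj A ⟶ B⟦i⟧, f = 0) := by
    intro hB A hA B hB' i hi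
    show Stmt6Aux.Vz (S.ν.functor.obj A) (B⟦i⟧)
    have h1 : Stmt6Aux.Vz (S.ν.functor.obj (A⟦-(d : ℤ)⟧)) (B⟦i - d⟧) :=
      hB A (Stmt6Aux.P_mem_GE hpre hA) B hB' (i - d) (by omega)
    rw [Stmt6Aux.vz_nuA_iff S] at h1
    exact (Stmt6Aux.vz_index_congr (by omega)).mp h1
  -- implication (a) → (b)
  have impAB : (∀ A ∈ P, ∀ B ∈ P, ∀ i : ℤ, (d : ℤ) < i → ∀ f : S.ν.functor.obj A ⟶ B⟦i⟧, f = 0) →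
      (∀ X ∈ coAisleGE P, (nud S d).obj X ∈ coAisleGE P) := by
    intro hA X hX B hB i hi
    show Stmt6Aux.Vz (S.ν.functor.obj (X⟦-(d : ℤ)⟧)) (B⟦i⟧)
    rw [Stmt6Aux.vz_nud_iff S]
    apply Stmt6Aux.key0 ⟨hpre, hgen⟩ hX
    intro A hA' j hj
    show Stmt6Aux.Vz (A⟦j⟧) ((S.ν.inverse.obj (B⟦i⟧))⟦(d : ℤ)⟧)
    rw [← Stmt6Aux.vz_nud_iff S,
      Stmt6Aux.vz_src_iso (S.ν.functor.mapIso (Stmt6Aux.shiftShiftIso A j (-(d : ℤ)) (j - d) (by omega))),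
      Stmt6Aux.vz_nuA_iff S]
    exact fun f => hA A hA' B hB (i - (j - d)) (by omega) f
  -- implication (b) → (d)
  have impBD : (∀ X ∈ coAisleGE P, (nud S d).obj X ∈ coAisleGE P) →
      (∀ A ∈ P, ∀ B ∈ P, ∀ i j : ℕ, 1 ≤ i → 1 ≤ j →
        ∀ f : iterObj (nud S d) j A ⟶ B⟦(i : ℤ)⟧, f = 0) := by
    intro hB A hA B hB' i j hi hj
    have hGE : ∀ m : ℕ, iterObj (nud S d) m A ∈ coAisleGE P := by
      intro m
      induction m with
      | zero => exact Stmt6Aux.P_mem_GE hpre hA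
      | succ m ih => exact hB _ ih
    exact hGE j B hB' (i : ℤ) (by exact_mod_cast hi)
  -- implication (d) → (a)
  have impDA : (∀ A ∈ P, ∀ B ∈ P, ∀ i j : ℕ, 1 ≤ i → 1 ≤ j →
        ∀ f : iterObj (nud S d) j A ⟶ B⟦(i : ℤ)⟧, f = 0) →
      (∀ A ∈ P, ∀ B ∈ P, ∀ i : ℤ, (d : ℤ) < i → ∀ f : S.ν.functor.obj A ⟶ B⟦i⟧, f = 0) := by
    intro hD A hA B hB i hi
    show Stmt6Aux.Vz (S.ν.functor.obj A) (B⟦i⟧)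
    have h1 : Stmt6Aux.Vz (S.ν.functor.obj (A⟦-(d : ℤ)⟧)) (B⟦(((i - d).toNat : ℕ) : ℤ)⟧) :=
      hD A hA B hB (i - d).toNat 1 (by omega) (by omega)
    rw [Stmt6Aux.vz_nuA_iff S] at h1
    exact (Stmt6Aux.vz_index_congr (by omega)).mp h1
  -- implication (b) → (c)
  have impBC : (∀ X ∈ coAisleGE P, (nud S d).obj X ∈ coAisleGE P) →
      (∀ X ∈ coAisleLE P, (nudInv S d).obj X ∈ coAisleLE P) := by
    intro hB Y hY A hA i hi
    have hcA := impBA hB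
    show Stmt6Aux.Vz (A⟦-i⟧) ((S.ν.inverse.obj Y)⟦(d : ℤ)⟧)
    rw [← Stmt6Aux.vz_nud_iff S]
    apply Stmt6Aux.key1 ⟨hpre, hgen⟩
    · intro B hB' i' hi'
      by_cases h1 : 1 ≤ i'
      · exact hB (A⟦-i⟧) (Stmt6Aux.shiftP_mem_X1 hpre hA (by omega)) B hB' i' h1
      · have hi0 : i' = 0 := by omega
        subst hi0
        show Stmt6Aux.Vz (S.ν.functor.obj ((A⟦-i⟧)⟦-(d : ℤ)⟧)) (B⟦(0 : ℤ)⟧)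
        rw [Stmt6Aux.vz_src_iso
          (S.ν.functor.mapIso (Stmt6Aux.shiftShiftIso A (-i) (-(d : ℤ)) (-i - d) (by omega))),
          Stmt6Aux.vz_nuA_iff S]
        exact fun f => hcA A hA B hB' (0 - (-i - d)) (by omega) f
    · intro B hB' j hj
      have := hY B hB' (-j) (by omega)
      exact (Stmt6Aux.vz_src_index_congr (by omega)).mp this
  -- implication (c) → (b)
  have impCB : (∀ X ∈ coAisleLE P, (nudInv S d).obj X ∈ coAisleLE P) →
      (∀ X ∈ coAisleGE P, (nud S d).obj X ∈ coAisleGE P) := by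
    intro hC X hX B hB i hi
    show Stmt6Aux.Vz (S.ν.functor.obj (X⟦-(d : ℤ)⟧)) (B⟦i⟧)
    rw [Stmt6Aux.vz_nud_iff S]
    apply Stmt6Aux.key0 ⟨hpre, hgen⟩ hX
    intro A hA j hj
    by_cases hj1 : j ≤ -1
    · have hLE := hC (B⟦i⟧) (Stmt6Aux.shiftP_mem_LE hpre hB (by omega))
      have := hLE A hA (-j) (by omega)
      exact (Stmt6Aux.vz_src_index_congr (by omega)).mp this
    · have hj0 : j = 0 := by omega
      subst hj0
      have h1 : Stmt6Aux.Vz (A⟦(-1 : ℤ)⟧) ((S.ν.inverse.obj (B⟦i - 1⟧))⟦(d : ℤ)⟧) := by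
        have hLE := hC (B⟦i - 1⟧) (Stmt6Aux.shiftP_mem_LE hpre hB (by omega))
        exact hLE A hA 1 le_rfl
      rw [← Stmt6Aux.vz_nud_iff S,
        Stmt6Aux.vz_src_iso
          (S.ν.functor.mapIso (Stmt6Aux.shiftShiftIso A (-1) (-(d : ℤ)) (-1 - d) (by omega))),
        Stmt6Aux.vz_nuA_iff S] at h1
      show Stmt6Aux.Vz (A⟦(0 : ℤ)⟧) ((S.ν.inverse.obj (B⟦i⟧))⟦(d : ℤ)⟧)
      rw [Stmt6Aux.vz_src_iso (Stmt6Aux.shiftZeroIso A), ← Stmt6Aux.vz_nud_iff S,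
        Stmt6Aux.vz_nuA_iff S]
      exact (Stmt6Aux.vz_index_congr (by omega)).mp h1
  exact ⟨⟨impAB, impBA⟩, ⟨impBC, impCB⟩,
    ⟨fun hc => impBD (impCB hc), fun hd => impBC (impAB (impDA hd))⟩⟩
end

section
/- Let T be a triangulated category with Serre functor ν and P a d-silting subcategory admitting an adjacent t-structure (T_{≤0}^P, T^{≥0}_P). If X ∈ T satisfies Hom_T(P, X[i]) = 0 for all 1 ≤ i ≤ d−1, then X decomposes as X ≅ X' ⊕ Y with X' ∈ T_{≤0}^P and Y ∈ T^{≥d}_P. -/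
/-!
STATEMENT 9: If P is a d-silting subcategory of T admitting an adjacent t-structure
(T_{≤0}^P, T^{≥0}_P) and X ∈ T satisfies Hom(P, X[i]) = 0 for 1 ≤ i ≤ d-1, then
X ≅ X' ⊕ Y with X' ∈ T_{≤0}^P and Y ∈ T^{≥d}_P.
-/

open CategoryTheory CategoryTheory.Limits CategoryTheory.Pretriangulated

universe w v u

variable (k : Type w) [Field k]
variable (C : Type u) [Category.{v} C] [Preadditive C] [Linear k C] [HasZeroObject C]
  [HasShift C ℤ] [∀ n : ℤ, (CategoryTheory.shiftFunctor C n).Additive] [Pretriangulated C]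
  [HasBinaryBiproducts C]

variable {k C}

/-- The shift `S[n]` of a subcategory. -/
def shiftSet (S : Set C) (n : ℤ) : Set C := {X | ∃ A ∈ S, Nonempty (X ≅ A⟦n⟧)}

/-- The t-structure adjacent to the co-t-structure of a silting subcategory `P`:
a pair with aisle `T_{≤0}^P` and coaisle `B = T^{≥1}_P`. -/
structure AdjacentTStructure (P : Set C) (B : Set C) : Prop where
  shift_aisle : ∀ X ∈ coAisleLE P, X⟦(1:ℤ)⟧ ∈ coAisleLE P
  shift_coaisle : ∀ X ∈ B, X⟦(-1:ℤ)⟧ ∈ B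
  iso_closed : ∀ {X Y : C}, (X ≅ Y) → X ∈ B → Y ∈ B
  orth : ∀ X ∈ coAisleLE P, ∀ Y ∈ B, ∀ f : X ⟶ Y, f = 0
  decomp : ∀ T : C, ∃ A ∈ coAisleLE P, ∃ Y ∈ B,
    ∃ (f : A ⟶ T) (g : T ⟶ Y) (h : Y ⟶ A⟦(1:ℤ)⟧),
      Triangle.mk f g h ∈ distTriang C

section Statement9Aux

set_option linter.unusedSectionVars false

/-- All maps from `X` to `Y` vanish. -/
def AZ {C : Type u} [Category.{v} C] (X Y : C) [Limits.HasZeroMorphisms C] : Prop :=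
  ∀ f : X ⟶ Y, f = 0

variable {k : Type w} [Field k]
variable {C : Type u} [Category.{v} C] [Preadditive C] [Linear k C] [HasZeroObject C]
  [HasShift C ℤ] [∀ n : ℤ, (CategoryTheory.shiftFunctor C n).Additive] [Pretriangulated C]
  [HasBinaryBiproducts C]

lemma az_of_iso {X X' Y Y' : C} (e₁ : X ≅ X') (e₂ : Y ≅ Y') (h : AZ X Y) : AZ X' Y' := by
  intro f
  have h0 := h (e₁.hom ≫ f ≫ e₂.inv)
  have hf : f = e₁.inv ≫ (e₁.hom ≫ f ≫ e₂.inv) ≫ e₂.hom := by simp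
  rw [hf, h0, zero_comp, comp_zero]

lemma az_shift {X Y : C} (h : AZ X Y) (n : ℤ) : AZ (X⟦n⟧) (Y⟦n⟧) := by
  intro f
  obtain ⟨g, rfl⟩ := (shiftFunctor C n).map_surjective f
  rw [h g, Functor.map_zero]

lemma az_unshift {X Y : C} (n : ℤ) (h : AZ (X⟦n⟧) (Y⟦n⟧)) : AZ X Y := by
  intro f
  apply (shiftFunctor C n).map_injective
  rw [Functor.map_zero]
  exact h _

/-- `X⟦a⟧⟦b⟧ ≅ X⟦c⟧` when `a + b = c`. -/
def isoShift (a b c : ℤ) (h : a + b = c) (X : C) : (X⟦a⟧)⟦b⟧ ≅ X⟦c⟧ :=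
  ((shiftFunctorAdd' C a b c h).app X).symm

/-- `X⟦0⟧ ≅ X`. -/
def isoShiftZero (X : C) : X⟦(0:ℤ)⟧ ≅ X := (shiftFunctorZero C ℤ).app X

/-- Serre duality: all maps `X ⟶ Y` vanish iff all maps `Y ⟶ νX` vanish. -/
lemma az_dual_iff (S : SerreFunctor k C) (X Y : C) :
    AZ X Y ↔ AZ Y (S.ν.functor.obj X) := by
  constructor
  · intro h g
    have hd : S.duality X Y g = 0 := by
      apply LinearMap.ext
      intro f
      rw [h f]
      simp
    have h2 := congrArg (S.duality X Y).symm hd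
    rwa [LinearEquiv.symm_apply_apply, map_zero] at h2
  · intro h f
    rw [← Module.forall_dual_apply_eq_zero_iff k]
    intro φ
    have hφ : φ = S.duality X Y ((S.duality X Y).symm φ) := (LinearEquiv.apply_symm_apply _ _).symm
    rw [hφ, h ((S.duality X Y).symm φ), map_zero]
    simp

section WithP

variable (P B : Set C)

lemma mem_aisle_of_iso {X Y : C} (e : X ≅ Y) (h : X ∈ coAisleLE P) : Y ∈ coAisleLE P := by
  intro A hA i hi f
  have h0 := h A hA i hi (f ≫ e.inv)
  have hf : f = (f ≫ e.inv) ≫ e.hom := by simp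
  rw [hf, h0, zero_comp]

lemma az_aisle (hadj : AdjacentTStructure P B) {V W : C}
    (hV : V ∈ coAisleLE P) (hW : W ∈ B) : AZ V W :=
  fun f => hadj.orth V hV W hW f

lemma aisle_shift_nat (hadj : AdjacentTStructure P B) {V : C} (hV : V ∈ coAisleLE P) :
    ∀ n : ℕ, V⟦(n : ℤ)⟧ ∈ coAisleLE P := by
  intro n
  induction n with
  | zero => exact mem_aisle_of_iso P (isoShiftZero V).symm hV
  | succ n ih =>
    exact mem_aisle_of_iso P (isoShift (n : ℤ) 1 ((n + 1 : ℕ) : ℤ) (by push_cast; ring) V)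
      (hadj.shift_aisle _ ih)

lemma aisle_shift (hadj : AdjacentTStructure P B) {V : C} (hV : V ∈ coAisleLE P)
    {m : ℤ} (hm : 0 ≤ m) : V⟦m⟧ ∈ coAisleLE P := by
  obtain ⟨n, rfl⟩ := Int.eq_ofNat_of_zero_le hm
  exact aisle_shift_nat P B hadj hV n

lemma P_mem_aisle (hpre : IsPresiltingSet P) {Q : C} (hQ : Q ∈ P) : Q ∈ coAisleLE P := by
  intro A hA i hi f
  have h1 : AZ A (Q⟦i⟧) := fun g => hpre A hA Q hQ i hi g
  exact az_of_iso (Iso.refl _) (isoShift i (-i) 0 (by ring) Q ≪≫ isoShiftZero Q)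
    (az_shift h1 (-i)) f

lemma P_shift_mem_aisle (hadj : AdjacentTStructure P B) (hpre : IsPresiltingSet P)
    {Q : C} (hQ : Q ∈ P) {m : ℤ} (hm : 0 ≤ m) : Q⟦m⟧ ∈ coAisleLE P :=
  aisle_shift P B hadj (P_mem_aisle P hpre hQ) hm

/-- If all (shifted) maps from `P` to `V` vanish, then `V` is a zero object. -/
lemma isZero_of_P_orth (hgen : GeneratesThick P) {V : C}
    (h : ∀ Q ∈ P, ∀ n : ℤ, AZ (Q⟦n⟧) V) : Limits.IsZero V := by
  have hthick : IsThick {G : C | ∀ n : ℤ, AZ (G⟦n⟧) V} := by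
    constructor
    · intro X Y e hX n f
      have h0 := hX n ((shiftFunctor C n).map e.hom ≫ f)
      have hf : f = (shiftFunctor C n).map e.inv ≫ ((shiftFunctor C n).map e.hom ≫ f) := by
        rw [← Category.assoc, ← Functor.map_comp, e.inv_hom_id, CategoryTheory.Functor.map_id,
          Category.id_comp]
      rw [hf, h0, comp_zero]
    · intro X hX m n f
      have h0 := hX (m + n) ((isoShift m n (m + n) rfl X).inv ≫ f)
      have hf : f = (isoShift m n (m + n) rfl X).hom ≫ ((isoShift m n (m + n) rfl X).inv ≫ f) := by
        simp
      rw [hf, h0, comp_zero]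
    · intro T hT h1 h3 n f
      have hT' := Pretriangulated.Triangle.shift_distinguished T hT n
      obtain ⟨g, hg⟩ := Pretriangulated.Triangle.yoneda_exact₂ _ hT' f (h1 n _)
      rw [hg, h3 n g]
      exact comp_zero
    · intro X Y inst hXY n f
      haveI := inst
      have h0 := hXY n ((shiftFunctor C n).map (biprod.fst : X ⊞ Y ⟶ X) ≫ f)
      have hf : f = (shiftFunctor C n).map biprod.inl ≫ ((shiftFunctor C n).map (biprod.fst : X ⊞ Y ⟶ X) ≫ f) := by
        rw [← Category.assoc, ← Functor.map_comp, biprod.inl_fst, CategoryTheory.Functor.map_id,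
          Category.id_comp]
      rw [hf, h0, comp_zero]
  have hV : ∀ n : ℤ, AZ (V⟦n⟧) V := hgen _ hthick (fun Q hQ => h Q hQ) V
  rw [Limits.IsZero.iff_id_eq_zero]
  have hid : 𝟙 V = (isoShiftZero V).inv ≫ (isoShiftZero V).hom := by simp
  have h00 := hV 0 (isoShiftZero V).hom
  rw [hid, h00, comp_zero]

/-- The "wall" lemma: if `Hom(P⟦j⟧, V) = 0` for all `j ≥ -c`, then `V⟦c⟧ ∈ B`. -/
lemma shift_mem_coaisle (hadj : AdjacentTStructure P B) (hsilt : IsSiltingSet P)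
    (c : ℤ) (V : C)
    (hprem : ∀ Q ∈ P, ∀ j : ℤ, -c ≤ j → AZ (Q⟦j⟧) V) : V⟦c⟧ ∈ B := by
  obtain ⟨A₀, hA₀, Z₀, hZ₀, f₀, g₀, h₀, hT⟩ := hadj.decomp (V⟦c⟧)
  have hzero : Limits.IsZero A₀ := by
    apply isZero_of_P_orth P hsilt.2
    intro Q hQ n φ
    rcases lt_or_ge n 0 with hn | hn
    · obtain ⟨m, hm, rfl⟩ : ∃ m : ℤ, 1 ≤ m ∧ n = -m := ⟨-n, by omega, by omega⟩
      exact hA₀ Q hQ m hm φ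
    · have hφf : φ ≫ f₀ = 0 := by
        have h1 : AZ (Q⟦n - c⟧) V := hprem Q hQ (n - c) (by omega)
        exact az_of_iso (isoShift (n - c) c n (by ring) Q) (Iso.refl _) (az_shift h1 c) _
      have hφ1 : (shiftFunctor C (1:ℤ)).map φ ≫
          (shiftFunctor C (1:ℤ)).map (Triangle.mk f₀ g₀ h₀).mor₁ = 0 := by
        refine ((shiftFunctor C (1:ℤ)).map_comp φ (Triangle.mk f₀ g₀ h₀).mor₁).symm.trans ?_
        have : φ ≫ (Triangle.mk f₀ g₀ h₀).mor₁ = 0 := hφf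
        rw [this, Functor.map_zero]
      obtain ⟨ψ, hψ⟩ := Pretriangulated.Triangle.coyoneda_exact₁ _ hT
        ((shiftFunctor C (1:ℤ)).map φ) hφ1
      have hψ0 : ψ = 0 := by
        have h1 : AZ (Q⟦n + 1⟧) Z₀ :=
          az_aisle P B hadj (P_shift_mem_aisle P B hadj hsilt.1 hQ (by omega)) hZ₀
        exact az_of_iso (isoShift n 1 (n + 1) rfl Q).symm (Iso.refl _) h1 ψ
      apply (shiftFunctor C (1:ℤ)).map_injective
      rw [Functor.map_zero]
      exact hψ.trans (by subst hψ0; exact zero_comp)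
  have hiso : IsIso g₀ :=
    (Pretriangulated.Triangle.isZero₁_iff_isIso₂ (Triangle.mk f₀ g₀ h₀) hT).1 hzero
  exact hadj.iso_closed (asIso g₀).symm hZ₀

end WithP

end Statement9Aux

theorem statement_9 (S : SerreFunctor k C) (d : ℕ) (hd : 1 ≤ d)
    (P : Set C) (hsilt : IsSiltingSet P)
    -- P is d-silting: Hom(ν(P), P[i]) = 0 for all i > d
    (hdsilt : ∀ A ∈ P, ∀ B ∈ P, ∀ i : ℤ, (d : ℤ) < i →
      ∀ f : S.ν.functor.obj A ⟶ B⟦i⟧, f = 0)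
    (B : Set C) (hadj : AdjacentTStructure P B)
    (X : C)
    (hX : ∀ A ∈ P, ∀ i : ℤ, 1 ≤ i → i ≤ (d : ℤ) - 1 → ∀ f : A ⟶ X⟦i⟧, f = 0) :
    ∃ X' ∈ coAisleLE P, ∃ Y ∈ shiftSet B (1 - (d : ℤ)), Nonempty (X ≅ X' ⊞ Y) := by
  classical
  obtain ⟨hpre, hgen⟩ := hsilt
  haveI : S.ν.functor.Additive := S.additive
  obtain ⟨A, hA, Z, hZ, f, g, h, hT⟩ := hadj.decomp X
  -- Step 1: the window vanishing `Hom(P⟦t⟧, Z) = 0` for all `t ≥ 1 - d`.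
  have hwindow : ∀ Q ∈ P, ∀ t : ℤ, 1 - (d : ℤ) ≤ t → AZ (Q⟦t⟧) Z := by
    intro Q hQ t ht φ
    rcases le_or_gt 0 t with h0 | h0
    · exact az_aisle P B hadj (P_shift_mem_aisle P B hadj hpre hQ h0) hZ φ
    · have h1 : AZ (Q⟦t - 1⟧) A := by
        obtain ⟨m, hm, hmt⟩ : ∃ m : ℤ, 1 ≤ m ∧ t - 1 = -m := ⟨1 - t, by omega, by omega⟩
        rw [hmt]
        exact fun ξ => hA Q hQ m hm ξ
      have hAZ1 : AZ (Q⟦t⟧) (A⟦(1:ℤ)⟧) :=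
        az_of_iso (isoShift (t - 1) 1 t (by ring) Q) (Iso.refl _) (az_shift h1 1)
      have hφh : φ ≫ (Triangle.mk f g h).mor₃ = 0 := hAZ1 _
      obtain ⟨ψ, hψ⟩ := Pretriangulated.Triangle.coyoneda_exact₃ _ hT φ hφh
      have h2 : AZ Q (X⟦-t⟧) := fun ξ => hX Q hQ (-t) (by omega) (by omega) ξ
      have h3 : AZ (Q⟦t⟧) X :=
        az_of_iso (Iso.refl _) (isoShift (-t) t 0 (by ring) X ≪≫ isoShiftZero X)
          (az_shift h2 t)
      rw [hψ, h3 ψ]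
      exact zero_comp
  -- Step 2: `Z⟦d-1⟧ ∈ B`.
  have hZt : Z⟦(d : ℤ) - 1⟧ ∈ B := by
    apply shift_mem_coaisle P B hadj ⟨hpre, hgen⟩ ((d : ℤ) - 1) Z
    intro Q hQ j hj
    exact hwindow Q hQ j (by omega)
  -- Step 3: `M := ν⁻¹((A⟦1⟧)⟦d-1⟧)` belongs to the aisle.
  have ε : S.ν.functor.obj (S.ν.inverse.obj ((A⟦(1:ℤ)⟧)⟦(d:ℤ) - 1⟧)) ≅ (A⟦(1:ℤ)⟧)⟦(d:ℤ) - 1⟧ :=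
    S.ν.counitIso.app _
  have hM : S.ν.inverse.obj ((A⟦(1:ℤ)⟧)⟦(d:ℤ) - 1⟧) ∈ coAisleLE P := by
    intro Q hQ i hi φ
    have hkey : AZ ((A⟦(1:ℤ)⟧)⟦(d:ℤ) - 1⟧)
        (S.ν.functor.obj ((S.ν.functor.obj Q)⟦-i⟧)) := by
      have hVB : (S.ν.functor.obj ((S.ν.functor.obj Q)⟦-i⟧))⟦i - (d:ℤ) - 1⟧ ∈ B := by
        apply shift_mem_coaisle P B hadj ⟨hpre, hgen⟩ (i - (d:ℤ) - 1)
        intro Q' hQ' j hj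
        have hds : AZ (S.ν.functor.obj Q) (Q'⟦j + i⟧) := fun ξ =>
          hdsilt Q hQ Q' hQ' (j + i) (by omega) ξ
        have h5 : AZ ((S.ν.functor.obj Q)⟦-i⟧) (Q'⟦j⟧) :=
          az_of_iso (Iso.refl _) (isoShift (j + i) (-i) j (by ring) Q') (az_shift hds (-i))
        exact (az_dual_iff S _ _).1 h5
      apply az_unshift (i - (d:ℤ) - 1)
      apply az_aisle P B hadj _ hVB
      have hAi : A⟦i - 1⟧ ∈ coAisleLE P := aisle_shift P B hadj hA (by omega)
      refine mem_aisle_of_iso P ?_ hAi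
      exact ((shiftFunctor C (i - (d:ℤ) - 1)).mapIso (isoShift 1 ((d:ℤ) - 1) (d:ℤ) (by ring) A)
        ≪≫ isoShift (d:ℤ) (i - (d:ℤ) - 1) (i - 1) (by ring) A).symm
    have h6 : AZ (S.ν.inverse.obj ((A⟦(1:ℤ)⟧)⟦(d:ℤ) - 1⟧)) ((S.ν.functor.obj Q)⟦-i⟧) := by
      intro ψ
      apply S.ν.functor.map_injective
      rw [Functor.map_zero]
      exact az_of_iso ε.symm (Iso.refl _) hkey _
    have h7 : AZ ((S.ν.inverse.obj ((A⟦(1:ℤ)⟧)⟦(d:ℤ) - 1⟧))⟦i⟧) (S.ν.functor.obj Q) :=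
      az_of_iso (Iso.refl _) (isoShift (-i) i 0 (by ring) _ ≪≫ isoShiftZero _) (az_shift h6 i)
    have h8 := (az_dual_iff S Q _).2 h7
    exact az_of_iso (Iso.refl _)
      (isoShift i (-i) 0 (by ring) _ ≪≫ isoShiftZero _) (az_shift h8 (-i)) φ
  -- Step 4: the connecting map `h` vanishes.
  have hAZZA : AZ Z (A⟦(1:ℤ)⟧) := by
    apply az_unshift ((d:ℤ) - 1)
    have hMZ : AZ (S.ν.inverse.obj ((A⟦(1:ℤ)⟧)⟦(d:ℤ) - 1⟧)) (Z⟦(d:ℤ) - 1⟧) :=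
      az_aisle P B hadj hM hZt
    exact az_of_iso (Iso.refl _) ε ((az_dual_iff S _ _).1 hMZ)
  have hzero : (Triangle.mk f g h).mor₃ = 0 := hAZZA h
  -- Step 5: split the triangle and conclude.
  obtain ⟨e, -, -⟩ :=
    Pretriangulated.exists_iso_binaryBiproduct_of_distTriang _ hT hzero
  refine ⟨A, hA, Z, ⟨Z⟦(d:ℤ) - 1⟧, hZt, ⟨?_⟩⟩, ⟨e⟩⟩
  exact (isoShift ((d:ℤ) - 1) (1 - (d:ℤ)) 0 (by ring) Z ≪≫ isoShiftZero Z).symm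
end
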